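/- There exists a faithful functor e : SimplexCategoryᵒᵖ ⥤ SimplexCategory such that e sends (the opposite of) the object [n] to [n+1] for every natural number n, and such that for every morphism φ : [n] ⟶ [m] of SimplexCategory with underlying monotone map f : Fin (n+1) → Fin (m+1), the morphism e.map φ.op : [m+1] ⟶ [n+1] has underlying map E f, i.e., the map sending i : Fin (m+2) to the number of k : Fin (n+1) with (f k : ℕ) < (i : ℕ). (Construction 7.2 and Proposition 7.3 of the paper.) -/

import Mathlib

open CategoryTheory

-- card of {k : Fin N | k < c}
lemma Ecard_lt_aux (N c : ℕ) :
    (Finset.univ.filter (fun k : Fin N => (k : ℕ) < c)).card = min c N := by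
  have : (Finset.univ.filter (fun k : Fin N => (k : ℕ) < c)).card
      = ((Finset.univ : Finset (Fin N)).map Fin.valEmbedding |>.filter (fun x => x < c)).card := by
    rw [Finset.filter_map, Finset.card_map]; rfl
  rw [this, Fin.map_valEmbedding_univ]
  have : (Finset.Iio N).filter (fun x => x < c) = Finset.Iio (min c N) := by
    ext x; simp [Nat.lt_min, and_comm]
  rw [this, Nat.card_Iio]

-- downward closed sets
lemma mem_iff_lt_card {N : ℕ} (s : Finset (Fin N))
    (hs : ∀ j k : Fin N, j ≤ k → k ∈ s → j ∈ s) (k : Fin N) :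
    k ∈ s ↔ (k : ℕ) < s.card := by
  constructor
  · intro hk
    have h : (Finset.univ.filter (fun j : Fin N => j ≤ k)) ⊆ s := by
      intro j hj
      exact hs j k (Finset.mem_filter.mp hj).2 hk
    have h2 : (Finset.univ.filter (fun j : Fin N => (j : ℕ) < (k : ℕ) + 1)).card ≤ s.card := by
      refine Finset.card_le_card ?_
      intro j hj
      refine h ?_
      simp only [Finset.mem_filter, Finset.mem_univ, true_and] at hj ⊢
      exact Fin.le_def.mpr (Nat.lt_succ_iff.mp hj)
    rw [Ecard_lt_aux] at h2
    have : (k : ℕ) + 1 ≤ min ((k : ℕ) + 1) N := le_min le_rfl k.isLt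
    omega
  · intro hk
    by_contra hk'
    have h : s ⊆ Finset.univ.filter (fun j : Fin N => (j : ℕ) < (k : ℕ)) := by
      intro j hj
      simp only [Finset.mem_filter, Finset.mem_univ, true_and]
      by_contra h
      exact hk' (hs k j (Fin.le_def.mpr (Nat.le_of_not_lt h)) hj)
    have := Finset.card_le_card h
    rw [Ecard_lt_aux] at this
    omega

def Emap {n m : ℕ} (f : Fin (n + 1) →o Fin (m + 1)) : Fin (m + 2) →o Fin (n + 2) where
  toFun i := ⟨(Finset.univ.filter (fun k : Fin (n + 1) => (f k : ℕ) < (i : ℕ))).card,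
    Nat.lt_succ_of_le (le_trans (Finset.card_filter_le _ _) (by simp))⟩
  monotone' i j hij := by
    simp only [Fin.mk_le_mk]
    refine Finset.card_le_card ?_
    intro k hk
    simp only [Finset.mem_filter, Finset.mem_univ, true_and] at hk ⊢
    exact lt_of_lt_of_le hk (Fin.le_def.mp hij)

lemma Emap_key {n m : ℕ} (f : Fin (n + 1) →o Fin (m + 1)) (i : Fin (m + 2)) (k : Fin (n + 1)) :
    (k : ℕ) < (Emap f i : ℕ) ↔ (f k : ℕ) < (i : ℕ) := by
  have := (mem_iff_lt_card (Finset.univ.filter (fun k : Fin (n + 1) => (f k : ℕ) < (i : ℕ)))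
    (fun a b hab hb => by
      simp only [Finset.mem_filter, Finset.mem_univ, true_and] at hb ⊢
      exact lt_of_le_of_lt (Fin.le_def.mp (f.monotone hab)) hb) k).symm
  rw [show (Emap f i : ℕ) = (Finset.univ.filter (fun k : Fin (n + 1) => (f k : ℕ) < (i : ℕ))).card from rfl]
  simpa using this

def Efunctor : SimplexCategoryᵒᵖ ⥤ SimplexCategory where
  obj X := SimplexCategory.mk (X.unop.len + 1)
  map {X Y} φ := SimplexCategory.mkHom (Emap φ.unop.toOrderHom)
  map_id X := by
    apply SimplexCategory.Hom.ext
    ext i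
    simp only [SimplexCategory.mkHom, SimplexCategory.Hom.toOrderHom_mk]
    show ((Emap (n := X.unop.len) (m := X.unop.len) (OrderHom.id)) i : ℕ) = (i : ℕ)
    show (Finset.univ.filter (fun k : Fin (X.unop.len + 1) => (k : ℕ) < (i : ℕ))).card = (i : ℕ)
    rw [Ecard_lt_aux]
    have hi : (i : ℕ) ≤ X.unop.len + 1 := Nat.lt_succ_iff.mp i.isLt
    omega
  map_comp {X Y Z} φ ψ := by
    apply SimplexCategory.Hom.ext
    ext i
    show ((Emap (φ.unop.toOrderHom.comp ψ.unop.toOrderHom)) i : ℕ)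
        = ((Emap ψ.unop.toOrderHom) (Emap φ.unop.toOrderHom i) : ℕ)
    show (Finset.univ.filter
        (fun k => (φ.unop.toOrderHom (ψ.unop.toOrderHom k) : ℕ) < (i : ℕ))).card
      = (Finset.univ.filter
        (fun k => (ψ.unop.toOrderHom k : ℕ) < ((Emap φ.unop.toOrderHom) i : ℕ))).card
    congr 1
    apply Finset.filter_congr
    intro k _
    simp only [eq_iff_iff]
    exact (Emap_key φ.unop.toOrderHom i _).symm

theorem stmt7 :
    ∃ e : SimplexCategoryᵒᵖ ⥤ SimplexCategory,
      e.Faithful ∧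
      (∀ n : ℕ, e.obj (Opposite.op (SimplexCategory.mk n)) = SimplexCategory.mk (n + 1)) ∧
      (∀ (n m : ℕ) (φ : SimplexCategory.mk n ⟶ SimplexCategory.mk m)
        (i : Fin ((e.obj (Opposite.op (SimplexCategory.mk m))).len + 1)),
        ((e.map φ.op).toOrderHom i : ℕ) =
          (Finset.univ.filter
            (fun k : Fin (n + 1) => (φ.toOrderHom k : ℕ) < (i : ℕ))).card) := by
  refine ⟨Efunctor, ⟨?_⟩, fun n => rfl, fun n m φ i => rfl⟩
  intro X Y φ ψ h
  have h'' : Emap φ.unop.toOrderHom = Emap ψ.unop.toOrderHom :=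
    congrArg SimplexCategory.Hom.toOrderHom h
  have h' : ∀ i, ((Emap φ.unop.toOrderHom) i : ℕ) = ((Emap ψ.unop.toOrderHom) i : ℕ) :=
    fun i => congrArg Fin.val (DFunLike.congr_fun h'' i)
  have : φ.unop = ψ.unop := by
    apply SimplexCategory.Hom.ext
    ext k
    have h1 : ∀ i : Fin (X.unop.len + 2),
        (φ.unop.toOrderHom k : ℕ) < (i : ℕ) ↔ (ψ.unop.toOrderHom k : ℕ) < (i : ℕ) := by
      intro i
      rw [← Emap_key φ.unop.toOrderHom i k, ← Emap_key ψ.unop.toOrderHom i k, h' i]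
    have h2 := h1 ⟨(ψ.unop.toOrderHom k : ℕ) + 1, by omega⟩
    have h3 := h1 ⟨(φ.unop.toOrderHom k : ℕ) + 1, by omega⟩
    simp only [Fin.val_mk] at h2 h3
    omega
  exact Opposite.unop_injective this
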